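/- Suppose F : [s₁,s₂] ⊆ (0,∞) → ℝ is twice continuously differentiable, satisfies F'(t) < F(t)/t on (s₁,s₂), and solves the Euler–Lagrange equation -d/dt[(F(t)/t - F'(t))²] = (1/t)(F(t)/t - F'(t))². Then there exist constants c₁, c₂ such that F(t) = c₁√t + c₂ t on [s₁,s₂]. -/

import Mathlib

open Set Real Filter Topology

lemma myConstIoo {a b : ℝ} {f : ℝ → ℝ} (h : ∀ t ∈ Set.Ioo a b, HasDerivAt f 0 t)
    {x y : ℝ} (hx : x ∈ Set.Ioo a b) (hy : y ∈ Set.Ioo a b) : f x = f y := by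
  apply (convex_Ioo a b).is_const_of_fderivWithin_eq_zero (𝕜 := ℝ)
    (fun t ht => (h t ht).differentiableAt.differentiableWithinAt) ?_ hx hy
  intro t ht
  rw [fderivWithin_of_isOpen isOpen_Ioo ht, (h t ht).hasFDerivAt.fderiv]
  ext
  simp

theorem stmt14 (s₁ s₂ : ℝ) (hs₁ : 0 < s₁) (hs : s₁ < s₂)
    (F F' F'' : ℝ → ℝ)
    (hder : ∀ t ∈ Set.Ioo s₁ s₂, HasDerivAt F (F' t) t)
    (hder2 : ∀ t ∈ Set.Ioo s₁ s₂, HasDerivAt F' (F'' t) t)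
    (hcontF : ContinuousOn F (Set.Icc s₁ s₂))
    (hcontF' : ContinuousOn F' (Set.Ioo s₁ s₂))
    (hcontF'' : ContinuousOn F'' (Set.Ioo s₁ s₂))
    (hstrict : ∀ t ∈ Set.Ioo s₁ s₂, F' t < F t / t)
    (hEL : ∀ t ∈ Set.Ioo s₁ s₂,
      HasDerivAt (fun u => (F u / u - F' u) ^ 2)
        (-(1 / t) * (F t / t - F' t) ^ 2) t) :
    ∃ c₁ c₂ : ℝ, ∀ t ∈ Set.Icc s₁ s₂, F t = c₁ * Real.sqrt t + c₂ * t := by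
  set G : ℝ → ℝ := fun u => F u / u - F' u with hGdef
  have ht0 : ∀ t ∈ Set.Ioo s₁ s₂, (0:ℝ) < t := fun t ht => hs₁.trans ht.1
  have hGpos : ∀ t ∈ Set.Ioo s₁ s₂, 0 < G t := fun t ht => sub_pos.mpr (hstrict t ht)
  -- derivative of G
  have hGder : ∀ t ∈ Set.Ioo s₁ s₂,
      HasDerivAt G (F' t / t - F t / t ^ 2 - F'' t) t := by
    intro t ht
    have h1 : HasDerivAt (fun u => F u / u) ((F' t * t - F t * 1) / t ^ 2) t :=
      (hder t ht).div (hasDerivAt_id t) (ht0 t ht).ne'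
    have h2 := h1.sub (hder2 t ht)
    have htne := (ht0 t ht).ne'
    refine h2.congr_deriv ?_
    field_simp
  -- From EL: G' t = -G t / (2 t)
  have hGder' : ∀ t ∈ Set.Ioo s₁ s₂, HasDerivAt G (-(G t) / (2 * t)) t := by
    intro t ht
    have hsq : HasDerivAt (fun u => (G u) ^ 2)
        (2 * G t ^ 1 * (F' t / t - F t / t ^ 2 - F'' t)) t := (hGder t ht).pow 2
    have heq : 2 * G t ^ 1 * (F' t / t - F t / t ^ 2 - F'' t)
        = -(1 / t) * (G t) ^ 2 := hsq.unique (hEL t ht)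
    have hGt := (hGpos t ht).ne'
    have htne := (ht0 t ht).ne'
    have hval : F' t / t - F t / t ^ 2 - F'' t = -(G t) / (2 * t) := by
      have h3 : G t * (2 * (F' t / t - F t / t ^ 2 - F'' t)) = G t * (-(G t) / t) := by
        rw [pow_one] at heq
        linear_combination heq
      have h4 := mul_left_cancel₀ hGt h3
      linear_combination h4 / 2
    rw [← hval]; exact hGder t ht
  -- g = sqrt * G has zero derivative
  set g : ℝ → ℝ := fun u => Real.sqrt u * G u with hgdef
  have hgder : ∀ t ∈ Set.Ioo s₁ s₂, HasDerivAt g 0 t := by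
    intro t ht
    have htpos := ht0 t ht
    have hsq : HasDerivAt Real.sqrt (1 / (2 * Real.sqrt t)) t := hasDerivAt_sqrt htpos.ne'
    have h := hsq.mul (hGder' t ht)
    refine h.congr_deriv ?_
    have hst : Real.sqrt t > 0 := Real.sqrt_pos.mpr htpos
    have hts : Real.sqrt t * Real.sqrt t = t := Real.mul_self_sqrt htpos.le
    have h2 : (1:ℝ) / (2 * Real.sqrt t) * G t + Real.sqrt t * (-G t / (2 * t)) = 0 := by
      rw [show (2:ℝ) * t = 2 * (Real.sqrt t * Real.sqrt t) by rw [hts]]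
      field_simp
      ring
    linarith [h2]
  -- midpoint
  set m : ℝ := (s₁ + s₂) / 2 with hmdef
  have hm : m ∈ Set.Ioo s₁ s₂ := ⟨by linarith, by linarith⟩
  set c : ℝ := g m with hcdef
  have hgc : ∀ t ∈ Set.Ioo s₁ s₂, g t = c := fun t ht => myConstIoo hgder ht hm
  -- so G t = c / sqrt t ; F' t = F t / t - c / sqrt t
  have hGeq : ∀ t ∈ Set.Ioo s₁ s₂, G t = c / Real.sqrt t := by
    intro t ht
    have hst : Real.sqrt t > 0 := Real.sqrt_pos.mpr (ht0 t ht)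
    have h1 : Real.sqrt t * G t = c := hgc t ht
    rw [eq_div_iff hst.ne', mul_comm]
    exact h1
  -- h = F/t - 2c/sqrt t has zero derivative
  set h : ℝ → ℝ := fun u => F u / u - 2 * c / Real.sqrt u with hhdef
  have hhder : ∀ t ∈ Set.Ioo s₁ s₂, HasDerivAt h 0 t := by
    intro t ht
    have htpos := ht0 t ht
    have hst : Real.sqrt t > 0 := Real.sqrt_pos.mpr htpos
    have hts : Real.sqrt t * Real.sqrt t = t := Real.mul_self_sqrt htpos.le
    have h1 : HasDerivAt (fun u => F u / u) ((F' t * t - F t * 1) / t ^ 2) t :=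
      (hder t ht).div (hasDerivAt_id t) htpos.ne'
    have hsq : HasDerivAt Real.sqrt (1 / (2 * Real.sqrt t)) t := hasDerivAt_sqrt htpos.ne'
    have h2 : HasDerivAt (fun u => 2 * c / Real.sqrt u)
        ((0 * Real.sqrt t - 2 * c * (1 / (2 * Real.sqrt t))) / (Real.sqrt t) ^ 2) t :=
      (hasDerivAt_const t (2 * c)).div hsq hst.ne'
    have h3 := h1.sub h2
    refine h3.congr_deriv ?_
    -- need: 0 = (F' t * t - F t)/t² + (2c/(2√t))/ (√t)²
    have hF' : F' t = F t / t - c / Real.sqrt t := by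
      have := hGeq t ht; rw [hGdef] at this; linarith [this]
    rw [hF']
    field_simp
    rw [Real.sq_sqrt htpos.le]; ring
  have hhc : ∀ t ∈ Set.Ioo s₁ s₂, h t = h m := fun t ht => myConstIoo hhder ht hm
  refine ⟨2 * c, h m, ?_⟩
  -- first on Ioo
  have hIoo : ∀ t ∈ Set.Ioo s₁ s₂, F t = 2 * c * Real.sqrt t + h m * t := by
    intro t ht
    have htpos := ht0 t ht
    have hst : Real.sqrt t > 0 := Real.sqrt_pos.mpr htpos
    have hts : Real.sqrt t * Real.sqrt t = t := Real.mul_self_sqrt htpos.le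
    have := hhc t ht
    rw [hhdef] at this
    have : F t / t - 2 * c / Real.sqrt t = h m := this
    field_simp at this
    apply mul_right_cancel₀ hst.ne'
    linear_combination this - 2 * c * hts
  -- extend to Icc by continuity
  intro t ht
  have hne : (𝓝[Set.Ioo s₁ s₂] t).NeBot := by
    apply mem_closure_iff_nhdsWithin_neBot.mp
    rw [closure_Ioo hs.ne]
    exact ht
  have hF : Filter.Tendsto F (𝓝[Set.Ioo s₁ s₂] t) (𝓝 (F t)) :=
    ((hcontF t ht).tendsto).mono_left (nhdsWithin_mono _ Set.Ioo_subset_Icc_self)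
  have hGt : Filter.Tendsto (fun u => 2 * c * Real.sqrt u + h m * u)
      (𝓝[Set.Ioo s₁ s₂] t) (𝓝 (2 * c * Real.sqrt t + h m * t)) := by
    apply Filter.Tendsto.mono_left _ nhdsWithin_le_nhds
    exact Continuous.tendsto ((continuous_const.mul Real.continuous_sqrt).add
      (continuous_const.mul continuous_id)) t
  have hF2 : Filter.Tendsto F (𝓝[Set.Ioo s₁ s₂] t) (𝓝 (2 * c * Real.sqrt t + h m * t)) := by
    apply hGt.congr'
    filter_upwards [self_mem_nhdsWithin] with u hu
    exact (hIoo u hu).symm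
  exact tendsto_nhds_unique hF hF2
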